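/- Let S = ⟨r_1,...,r_k⟩ with r_1 < ... < r_k, fix a ∈ S and a factorization s = (s_1,...,s_k) of a in S. If |s| ≥ r_k and s_k = 0, then there exists a factorization s' of a in S with |s'| < |s| and s'_k > 0. -/

import Mathlib

open Finset

lemma countAux {k : ℕ} (r : Fin (k + 1) → ℕ) (hinj : Function.Injective r) :
    ∀ B : List ℕ, (∀ x ∈ B, ∃ i, x = r i) →
      (∑ i, B.count (r i) = B.length) ∧ (∑ i, B.count (r i) * r i = B.sum) := by
  intro B
  induction B with
  | nil => simp
  | cons x B ih =>
    intro h
    obtain ⟨i0, hi0⟩ := h x (List.mem_cons_self ..)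
    obtain ⟨h1, h2⟩ := ih (fun y hy => h y (List.mem_cons_of_mem _ hy))
    subst hi0
    constructor
    · simp only [List.count_cons, beq_iff_eq, hinj.eq_iff, Finset.sum_add_distrib, h1,
        List.length_cons]
      simp [Finset.sum_ite_eq Finset.univ i0 (fun _ => 1)]
    · simp only [List.count_cons, beq_iff_eq, hinj.eq_iff, add_mul, Finset.sum_add_distrib, h2,
        List.sum_cons, ite_mul, one_mul, zero_mul]
      rw [Finset.sum_ite_eq Finset.univ i0 (fun i => r i)]
      simp [add_comm]

theorem stmt1 (k : ℕ) (r : Fin (k + 1) → ℕ) (hmono : StrictMono r) (hpos : 0 < r 0)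
    (a : ℕ) (s : Fin (k + 1) → ℕ) (hfac : ∑ i, s i * r i = a)
    (hlen : r (Fin.last k) ≤ ∑ i, s i) (hlast : s (Fin.last k) = 0) :
    ∃ s' : Fin (k + 1) → ℕ, (∑ i, s' i * r i = a) ∧ (∑ i, s' i) < (∑ i, s i) ∧
      0 < s' (Fin.last k) := by
  set rk := r (Fin.last k) with hrkdef
  have hrk : 0 < rk := hpos.trans_le (hmono.monotone (Fin.zero_le _))
  set L : List ℕ := (List.ofFn fun i => List.replicate (s i) (r i)).flatten with hLdef
  have hLlen : L.length = ∑ i, s i := by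
    simp only [hLdef, List.length_flatten, List.map_ofFn, List.sum_ofFn, Function.comp,
      List.length_replicate]
  have hLsum : L.sum = a := by
    simp only [hLdef, List.sum_flatten, List.map_ofFn, List.sum_ofFn, Function.comp,
      List.sum_replicate, smul_eq_mul]
    exact hfac
  have hmemL : ∀ x ∈ L, ∃ i, i ≠ Fin.last k ∧ x = r i := by
    intro x hx
    simp only [hLdef, List.mem_flatten, List.mem_ofFn] at hx
    obtain ⟨l, ⟨i, rfl⟩, hxl⟩ := hx
    obtain ⟨hs, rfl⟩ := List.mem_replicate.mp hxl
    exact ⟨i, fun h => hs (h ▸ hlast), rfl⟩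
  have hmemL' : ∀ x ∈ L, 0 < x ∧ x < rk := by
    intro x hx
    obtain ⟨i, hi, rfl⟩ := hmemL x hx
    exact ⟨hpos.trans_le (hmono.monotone (Fin.zero_le _)),
      hmono (lt_of_le_of_ne (Fin.le_last i) hi)⟩
  -- pigeonhole on prefix sums mod rk
  have hpig : ∃ j1 j2 : Fin (rk + 1), j1 < j2 ∧
      ((L.take j1).sum % rk = (L.take j2).sum % rk) := by
    obtain ⟨j1, j2, hne, hfeq⟩ := Fintype.exists_ne_map_eq_of_card_lt
      (fun j : Fin (rk + 1) => (⟨(L.take j).sum % rk, Nat.mod_lt _ hrk⟩ : Fin rk)) (by simp)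
    have hval : (L.take j1).sum % rk = (L.take j2).sum % rk := by
      simpa [Fin.mk.injEq] using hfeq
    rcases Ne.lt_or_gt hne with h | h
    exacts [⟨j1, j2, h, hval⟩, ⟨j2, j1, h, hval.symm⟩]
  obtain ⟨j1, j2, hlt, hmod⟩ := hpig
  have h12 : (j1 : ℕ) < (j2 : ℕ) := Fin.lt_def.mp hlt
  set B : List ℕ := (L.take j2).drop j1 with hBdef
  have hsub : B.Sublist L := (List.drop_sublist _ _).trans (List.take_sublist _ _)
  have htake2len : (L.take (j2 : ℕ)).length = j2 := by
    rw [List.length_take, hLlen]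
    exact min_eq_left ((Nat.lt_succ_iff.mp j2.isLt).trans hlen)
  have hBlen : B.length = (j2 : ℕ) - j1 := by
    simp [hBdef, List.length_drop, htake2len]
  have hBpos : 0 < B.length := by omega
  have hsumsplit : (L.take j1).sum + B.sum = (L.take j2).sum := by
    have h1 : (L.take (j2 : ℕ)).take (j1 : ℕ) = L.take (j1 : ℕ) := by
      rw [List.take_take, min_eq_left h12.le]
    have := List.sum_take_add_sum_drop (L.take (j2 : ℕ)) (j1 : ℕ)
    rw [h1] at this
    exact this
  have hdvd : rk ∣ B.sum := by
    have h1 : (L.take (j1:ℕ)).sum ≤ (L.take (j2:ℕ)).sum := by omega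
    have := (Nat.modEq_iff_dvd' h1).mp hmod
    have h2 : (L.take (j2:ℕ)).sum - (L.take (j1:ℕ)).sum = B.sum := by omega
    rwa [h2] at this
  obtain ⟨m, hm⟩ := hdvd
  have hBmem : ∀ x ∈ B, 0 < x ∧ x < rk := fun x hx => hmemL' x (hsub.subset hx)
  have hBsumpos : 0 < B.sum := by
    exact List.sum_pos B (fun x hx => (hBmem x hx).1) (List.length_pos_iff.mp hBpos)
  have hmpos : 0 < m := by
    rcases Nat.eq_zero_or_pos m with h | h
    · simp [h] at hm; omega
    · exact h
  have hBsumle : B.sum ≤ B.length * (rk - 1) := by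
    have := List.sum_le_card_nsmul B (rk - 1) (fun x hx => by
      have := (hBmem x hx).2; omega)
    simpa [smul_eq_mul] using this
  have hmlt : m < B.length := by
    have e : B.length * (rk - 1) + B.length * 1 = B.length * rk := by
      rw [← Nat.mul_add]; congr 1; omega
    have h1' : rk * m < B.length * rk := by
      have := hBsumle; omega
    have h1 : rk * m < rk * B.length := by rwa [mul_comm B.length rk] at h1'
    exact lt_of_mul_lt_mul_left h1 (Nat.zero_le _)
  -- counting
  have hBrange : ∀ x ∈ B, ∃ i, x = r i := fun x hx => by
    obtain ⟨i, _, h⟩ := hmemL x (hsub.subset hx); exact ⟨i, h⟩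
  obtain ⟨hcsum, hcrsum⟩ := countAux r hmono.injective B hBrange
  set c : Fin (k + 1) → ℕ := fun i => B.count (r i) with hcdef
  have hclast : c (Fin.last k) = 0 := by
    rw [hcdef]
    refine List.count_eq_zero.mpr (fun h => ?_)
    exact absurd (hBmem _ h).2 (by simp [hrkdef])
  have hcle : ∀ i, c i ≤ s i := by
    intro i
    have h1 : B.count (r i) ≤ L.count (r i) := hsub.count_le _
    have h2 : L.count (r i) = s i := by
      simp only [hLdef, List.count_flatten, List.map_ofFn, List.sum_ofFn, Function.comp,
        List.count_replicate, beq_iff_eq, hmono.injective.eq_iff]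
      simp [Finset.sum_ite_eq Finset.univ i (fun j => s j)]
    show List.count (r i) B ≤ s i
    omega
  refine ⟨fun i => if i = Fin.last k then m else s i - c i, ?_, ?_, by simp [hmpos]⟩
  · show ∑ i, (if i = Fin.last k then m else s i - c i) * r i = a
    have key : ∑ i, ((if i = Fin.last k then m else s i - c i) * r i + c i * r i)
        = ∑ i, (s i * r i + if i = Fin.last k then rk * m else 0) := by
      refine Finset.sum_congr rfl (fun i _ => ?_)
      rcases eq_or_ne i (Fin.last k) with h | h
      · subst h
        simp [hclast, hlast, mul_comm, hrkdef]
      · simp only [if_neg h]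
        have := hcle i
        have : (s i - c i) * r i + c i * r i = (s i - c i + c i) * r i := (add_mul _ _ _).symm
        rw [this, Nat.sub_add_cancel (hcle i)]
        simp
    rw [Finset.sum_add_distrib, Finset.sum_add_distrib, hcrsum, hfac,
      Finset.sum_ite_eq' Finset.univ (Fin.last k) (fun _ => rk * m)] at key
    simp only [Finset.mem_univ, if_true] at key
    omega
  · show ∑ i, (if i = Fin.last k then m else s i - c i) < ∑ i, s i
    have key : ∑ i, ((if i = Fin.last k then m else s i - c i) + c i)
        = ∑ i, (s i + if i = Fin.last k then m else 0) := by
      refine Finset.sum_congr rfl (fun i _ => ?_)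
      rcases eq_or_ne i (Fin.last k) with h | h
      · subst h; simp [hclast, hlast]
      · simp only [if_neg h]
        have := hcle i
        omega
    rw [Finset.sum_add_distrib, Finset.sum_add_distrib, hcsum,
      Finset.sum_ite_eq' Finset.univ (Fin.last k) (fun _ => m)] at key
    simp only [Finset.mem_univ, if_true] at key
    omega
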